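/- Let f = a₀ + Σⱼ aⱼ zⱼ with a₀,…,aₙ ∈ ℂ such that the coefficient vector (a₁,…,aₙ) is not a complex scalar multiple of any real vector (equivalently, the 2×n real matrix with rows (Re a₁,…,Re aₙ) and (Im a₁,…,Im aₙ) has rank 2). Then the imaginary projection of f is all of ℝⁿ. -/

import Mathlib

theorem imagProj_affine_rank_two {n : ℕ} (a₀ : ℂ) (a : Fin n → ℂ)
    (ha : ¬ ∃ (c : ℂ) (b : Fin n → ℝ), a = fun j => c * (b j : ℂ)) :
    {y : Fin n → ℝ | ∃ z : Fin n → ℂ,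
        a₀ + ∑ j, a j * z j = 0 ∧ (fun j => (z j).im) = y} = Set.univ := by
  have key : ∃ j k, (a j).re * (a k).im - (a j).im * (a k).re ≠ 0 := by
    by_contra h
    push_neg at h
    apply ha
    by_cases h0 : a = 0
    · exact ⟨0, 0, by funext j; simp [h0]⟩
    · obtain ⟨k, hk⟩ := Function.ne_iff.mp h0
      refine ⟨a k, fun j => ((a j).re * (a k).re + (a j).im * (a k).im) / Complex.normSq (a k), ?_⟩
      funext j
      have hk' : Complex.normSq (a k) ≠ 0 := by
        simpa [Complex.normSq_eq_zero] using hk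
      have hjk := h j k
      have hk2 : (a k).re ^ 2 + (a k).im ^ 2 ≠ 0 := by
        intro hc
        apply hk'
        simp only [Complex.normSq_apply]
        nlinarith [sq_nonneg (a k).re, sq_nonneg (a k).im]
      have hk3 : (a k).re * (a k).re + (a k).im * (a k).im ≠ 0 := by
        simpa [Complex.normSq_apply] using hk'
      apply Complex.ext <;>
        simp only [Complex.mul_re, Complex.mul_im, Complex.ofReal_re, Complex.ofReal_im,
          Complex.normSq_apply, mul_zero, zero_mul, sub_zero, add_zero, zero_add] <;>
        rw [← mul_div_assoc, eq_div_iff hk3]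
      · linear_combination (a k).im * hjk
      · linear_combination (-(a k).re) * hjk
  rw [Set.eq_univ_iff_forall]
  intro y
  obtain ⟨j, k, hD⟩ := key
  have hjk : j ≠ k := by
    rintro rfl; apply hD; ring
  set p := (a j).re with hp
  set q := (a j).im with hq
  set r := (a k).re with hr
  set s := (a k).im with hs
  set t : ℂ := -(a₀ + (∑ m, a m * (y m : ℂ)) * Complex.I) with ht
  set X : ℝ := (t.re * s - t.im * r) / (p * s - q * r) with hX
  set Y : ℝ := (p * t.im - q * t.re) / (p * s - q * r) with hY
  refine ⟨fun m => (((if m = j then X else 0) + (if m = k then Y else 0) : ℝ) : ℂ)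
      + (y m : ℂ) * Complex.I, ?_, ?_⟩
  · have h1 : (∑ m, a m * ((((if m = j then X else 0) + (if m = k then Y else 0) : ℝ) : ℂ)
        + (y m : ℂ) * Complex.I))
        = a j * (X : ℂ) + a k * (Y : ℂ) + (∑ m, a m * (y m : ℂ)) * Complex.I := by
      have step : ∀ m ∈ Finset.univ, a m * ((((if m = j then X else 0) + (if m = k then Y else 0) : ℝ) : ℂ)
          + (y m : ℂ) * Complex.I)
          = (if m = j then a j * (X : ℂ) else 0) + ((if m = k then a k * (Y : ℂ) else 0)
            + a m * (y m : ℂ) * Complex.I) := by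
        intro m _
        by_cases h1 : m = j <;> by_cases h2 : m = k
        · exact absurd (h1.symm.trans h2) hjk
        · rw [if_pos h1, if_neg h2, if_pos h1, if_neg h2, h1]; push_cast; ring
        · rw [if_neg h1, if_pos h2, if_neg h1, if_pos h2, h2]; push_cast; ring
        · rw [if_neg h1, if_neg h2, if_neg h1, if_neg h2]; push_cast; ring
      rw [Finset.sum_congr rfl step, Finset.sum_add_distrib, Finset.sum_add_distrib,
        Finset.sum_ite_eq' Finset.univ j, Finset.sum_ite_eq' Finset.univ k, ← Finset.sum_mul]
      simp [add_assoc]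
    rw [h1]
    have h2 : a j * (X : ℂ) + a k * (Y : ℂ) = t := by
      apply Complex.ext <;>
        simp only [Complex.add_re, Complex.add_im, Complex.mul_re, Complex.mul_im,
          Complex.ofReal_re, Complex.ofReal_im, mul_zero, zero_mul, sub_zero, add_zero,
          zero_add, hX, hY, ← hp, ← hq, ← hr, ← hs] <;>
        rw [mul_div_assoc', mul_div_assoc', ← add_div, div_eq_iff hD] <;> ring
    rw [h2, ht]
    ring
  · funext m
    simp
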